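/- In a two-layer linear network (L = 2) with balanced initialization W₁(0)W₁(0)ᵀ = W₂(0)ᵀW₂(0) evolving under the gradient flow Ẇ₁ = −W₂ᵀ G, Ẇ₂ = −G W₁ᵀ with G = G(t) = ∂ℓ/∂Π at Π = W₂W₁, the product Π = W₂W₁ satisfies Π̇ = −(ΠΠᵀ)^{1/2} G − G (ΠᵀΠ)^{1/2}. -/

import Mathlib

open Matrix

section

open scoped ComplexOrder

/-- The positive semidefinite square root of a positive semidefinite matrix
(the definition `Matrix.PosSemidef.sqrt` of the older Mathlib, since removed). -/
noncomputable def Matrix.PosSemidef.sqrt {n 𝕜 : Type*} [RCLike 𝕜] [Fintype n] [DecidableEq n]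
    {A : Matrix n n 𝕜} (hA : A.PosSemidef) : Matrix n n 𝕜 :=
  hA.1.eigenvectorUnitary.1 * diagonal ((↑) ∘ (√·) ∘ hA.1.eigenvalues) *
    (star hA.1.eigenvectorUnitary : Matrix n n 𝕜)

end

open scoped MatrixOrder in
theorem Matrix.PosSemidef.eq_sqrt_of_sq_eq {n : Type*} [Fintype n] [DecidableEq n]
    {A : Matrix n n ℝ} (hA : A.PosSemidef) (B : Matrix n n ℝ) (hB : B.PosSemidef)
    (hAB : A ^ 2 = B) : A = hB.sqrt := by
  have e : hB.sqrt = cfc Real.sqrt B := by rw [hB.1.cfc_eq]; rfl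
  have e2 : CFC.sqrt B = cfc Real.sqrt B := by
    rw [CFC.sqrt_eq_real_sqrt B hB.nonneg, cfcₙ_eq_cfc]
  rw [e, ← e2, eq_comm,
    CFC.sqrt_eq_iff B A hB.nonneg hA.nonneg, ← sq, hAB]

/-- derivative of an entry of a matrix product -/
private lemma deriv_entry_mul {m n p : Type*} [Fintype n]
    (A : ℝ → Matrix m n ℝ) (B : ℝ → Matrix n p ℝ)
    (hA : ∀ a b, Differentiable ℝ fun t => A t a b)
    (hB : ∀ a b, Differentiable ℝ fun t => B t a b)
    (t : ℝ) (a : m) (b : p) :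
    deriv (fun s => (A s * B s) a b) t =
      ∑ k, (deriv (fun s => A s a k) t * B t k b + A t a k * deriv (fun s => B s k b) t) := by
  have : (fun s => (A s * B s) a b) = fun s => ∑ k, A s a k * B s k b := by
    funext s; simp [Matrix.mul_apply]
  rw [this, deriv_fun_sum (fun k _ => ((hA a k).fun_mul (hB k b)).differentiableAt)]
  exact Finset.sum_congr rfl fun k _ => deriv_fun_mul ((hA a k) t) ((hB k b) t)

private lemma entry_diff_mul {m n p : Type*} [Fintype n]
    (A : ℝ → Matrix m n ℝ) (B : ℝ → Matrix n p ℝ)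
    (hA : ∀ a b, Differentiable ℝ fun t => A t a b)
    (hB : ∀ a b, Differentiable ℝ fun t => B t a b)
    (a : m) (b : p) :
    Differentiable ℝ (fun s => (A s * B s) a b) := by
  have : (fun s => (A s * B s) a b) = fun s => ∑ k, A s a k * B s k b := by
    funext s; simp [Matrix.mul_apply]
  rw [this]
  exact Differentiable.fun_sum fun k _ => (hA a k).mul (hB k b)

/-- Two-layer linear network under balanced gradient flow: if
`Ẇ₁ = −W₂ᵀ G`, `Ẇ₂ = −G W₁ᵀ` and `W₁(0)W₁(0)ᵀ = W₂(0)ᵀW₂(0)`, then the product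
`Π = W₂W₁` satisfies `Π̇ = −(ΠΠᵀ)^{1/2} G − G (ΠᵀΠ)^{1/2}` (entrywise derivatives,
positive semidefinite square roots). -/
theorem stmt11 {d h d' : ℕ}
    (W₁ : ℝ → Matrix (Fin h) (Fin d) ℝ) (W₂ : ℝ → Matrix (Fin d') (Fin h) ℝ)
    (G : ℝ → Matrix (Fin d') (Fin d) ℝ)
    (hG : ∀ a b, Continuous fun t => G t a b)
    (hW₁ : ∀ a b, Differentiable ℝ fun t => W₁ t a b)
    (hW₂ : ∀ a b, Differentiable ℝ fun t => W₂ t a b)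
    (hflow1 : ∀ t (a : Fin h) (b : Fin d),
      deriv (fun s => W₁ s a b) t = (-((W₂ t)ᵀ * G t)) a b)
    (hflow2 : ∀ t (a : Fin d') (b : Fin h),
      deriv (fun s => W₂ s a b) t = (-(G t * (W₁ t)ᵀ)) a b)
    (hbal : W₁ 0 * (W₁ 0)ᵀ = (W₂ 0)ᵀ * W₂ 0) :
    ∀ t (a : Fin d') (b : Fin d),
      deriv (fun s => (W₂ s * W₁ s) a b) t =
        (-((posSemidef_self_mul_conjTranspose (W₂ t * W₁ t)).sqrt * G t) -
          G t * (posSemidef_conjTranspose_mul_self (W₂ t * W₁ t)).sqrt) a b := by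
  have hW₁T : ∀ (a : Fin d) (b : Fin h), Differentiable ℝ fun t => (W₁ t)ᵀ a b :=
    fun a b => hW₁ b a
  have hW₂T : ∀ (a : Fin h) (b : Fin d'), Differentiable ℝ fun t => (W₂ t)ᵀ a b :=
    fun a b => hW₂ b a
  -- balancedness propagates
  have hbal' : ∀ t, W₁ t * (W₁ t)ᵀ = (W₂ t)ᵀ * W₂ t := by
    intro t
    ext a b
    have hconst : ∀ s, (W₁ s * (W₁ s)ᵀ) a b - ((W₂ s)ᵀ * W₂ s) a b
        = (W₁ 0 * (W₁ 0)ᵀ) a b - ((W₂ 0)ᵀ * W₂ 0) a b := by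
      have := is_const_of_deriv_eq_zero (f := fun s =>
          (W₁ s * (W₁ s)ᵀ) a b - ((W₂ s)ᵀ * W₂ s) a b) ?_ ?_
      · exact fun s => this s 0
      · exact (entry_diff_mul W₁ (fun s => (W₁ s)ᵀ) hW₁ hW₁T a b).sub
          (entry_diff_mul (fun s => (W₂ s)ᵀ) W₂ hW₂T hW₂ a b)
      · intro s
        rw [deriv_fun_sub ((entry_diff_mul W₁ (fun s => (W₁ s)ᵀ) hW₁ hW₁T a b) s)
            ((entry_diff_mul (fun s => (W₂ s)ᵀ) W₂ hW₂T hW₂ a b) s),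
          deriv_entry_mul W₁ (fun s => (W₁ s)ᵀ) hW₁ hW₁T,
          deriv_entry_mul (fun s => (W₂ s)ᵀ) W₂ hW₂T hW₂]
        rw [sub_eq_zero]
        simp only [Matrix.transpose_apply]
        simp only [hflow1, hflow2]
        simp only [Matrix.mul_apply, Matrix.neg_apply, Matrix.transpose_apply,
          Finset.sum_mul, Finset.mul_sum, Finset.sum_add_distrib, neg_mul, mul_neg,
          Finset.sum_neg_distrib]
        rw [Finset.sum_comm (s := Finset.univ (α := Fin d')) (t := Finset.univ (α := Fin d)),
          Finset.sum_comm (s := Finset.univ (α := Fin d')) (t := Finset.univ (α := Fin d))]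
        rw [add_comm]
        congr 1 <;> · congr 1; apply Finset.sum_congr rfl; intros; apply Finset.sum_congr rfl; intros; ring
    have := hconst t
    rw [hbal, sub_self] at this
    exact sub_eq_zero.mp this
  intro t a b
  -- derivative of the product
  have hd : deriv (fun s => (W₂ s * W₁ s) a b) t
      = ((-(G t * (W₁ t)ᵀ)) * W₁ t + W₂ t * (-((W₂ t)ᵀ * G t))) a b := by
    rw [deriv_entry_mul W₂ W₁ hW₂ hW₁]
    simp only [hflow1, hflow2, Matrix.add_apply, Matrix.mul_apply, Finset.sum_add_distrib]
  -- identify square roots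
  have hsq1 : W₂ t * (W₂ t)ᴴ =
      (posSemidef_self_mul_conjTranspose (W₂ t * W₁ t)).sqrt := by
    apply (posSemidef_self_mul_conjTranspose (W₂ t)).eq_sqrt_of_sq_eq
    have hb := hbal' t
    rw [conjTranspose_eq_transpose_of_trivial, conjTranspose_eq_transpose_of_trivial,
      Matrix.transpose_mul]
    calc (W₂ t * (W₂ t)ᵀ) ^ 2 = W₂ t * ((W₂ t)ᵀ * W₂ t) * (W₂ t)ᵀ := by
          rw [pow_two]; simp [Matrix.mul_assoc]
      _ = W₂ t * (W₁ t * (W₁ t)ᵀ) * (W₂ t)ᵀ := by rw [hb]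
      _ = W₂ t * W₁ t * ((W₁ t)ᵀ * (W₂ t)ᵀ) := by simp [Matrix.mul_assoc]
  have hsq2 : (W₁ t)ᴴ * W₁ t =
      (posSemidef_conjTranspose_mul_self (W₂ t * W₁ t)).sqrt := by
    apply (posSemidef_conjTranspose_mul_self (W₁ t)).eq_sqrt_of_sq_eq
    have hb := hbal' t
    rw [conjTranspose_eq_transpose_of_trivial, conjTranspose_eq_transpose_of_trivial,
      Matrix.transpose_mul]
    calc ((W₁ t)ᵀ * W₁ t) ^ 2 = (W₁ t)ᵀ * (W₁ t * (W₁ t)ᵀ) * W₁ t := by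
          rw [pow_two]; simp [Matrix.mul_assoc]
      _ = (W₁ t)ᵀ * ((W₂ t)ᵀ * W₂ t) * W₁ t := by rw [hb]
      _ = (W₁ t)ᵀ * (W₂ t)ᵀ * (W₂ t * W₁ t) := by simp [Matrix.mul_assoc]
  rw [hd, ← hsq1, ← hsq2]
  have : (-(G t * (W₁ t)ᵀ)) * W₁ t + W₂ t * (-((W₂ t)ᵀ * G t))
      = -(W₂ t * (W₂ t)ᴴ * G t) - G t * ((W₁ t)ᴴ * W₁ t) := by
    rw [conjTranspose_eq_transpose_of_trivial, conjTranspose_eq_transpose_of_trivial]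
    simp [Matrix.mul_assoc]
    abel
  rw [this]
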